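/- For every bounded self-adjoint operator H on a complex Hilbert space 𝓗, every unit vector ψ, every λ ∈ ℝ and every ε > 0, the inequality 𝒯(H,ψ) ≥ (1/ε)·(2ε·Im⟨ψ, (H − λ − iε)⁻¹ ψ⟩)² is always strict whenever 𝒯(H,ψ) is finite; i.e. equality can never hold for a bounded (hence semibounded) Hamiltonian. -/

import Mathlib

open MeasureTheory Complex
open scoped ENNReal

variable {𝓗 : Type*} [NormedAddCommGroup 𝓗] [InnerProductSpace ℂ 𝓗] [CompleteSpace 𝓗]

/-- The unitary group `e^{-iHt}` generated by a bounded operator `H`,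
defined via the exponential series. -/
noncomputable def timeEvolution (H : 𝓗 →L[ℂ] 𝓗) (t : ℝ) : 𝓗 →L[ℂ] 𝓗 :=
  NormedSpace.exp ((-(Complex.I * (t : ℂ))) • H)

/-- The sojourn time `𝒯(H,ψ) = ∫_ℝ |⟨ψ, e^{-iHt}ψ⟩|² dt ∈ [0,∞]`. -/
noncomputable def sojournTime (H : 𝓗 →L[ℂ] 𝓗) (ψ : 𝓗) : ℝ≥0∞ :=
  ∫⁻ t : ℝ, ENNReal.ofReal (‖(inner ℂ ψ (timeEvolution H t ψ) : ℂ)‖ ^ 2)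

/-- The resolvent `R(z) = (H - z)⁻¹` (via `Ring.inverse`; for self-adjoint `H`
and `Im z ≠ 0` the operator `H - z` is invertible and this is its genuine inverse). -/
noncomputable def resolventOp (H : 𝓗 →L[ℂ] 𝓗) (z : ℂ) : 𝓗 →L[ℂ] 𝓗 :=
  Ring.inverse (H - z • 1)

/-! ### Auxiliary material -/

open Set

section Aux

lemma timeEvolution_eq (H : 𝓗 →L[ℂ] 𝓗) (t : ℝ) :
    timeEvolution H t = NormedSpace.exp ((t : ℂ) • ((-Complex.I) • H)) := by
  rw [timeEvolution, smul_smul]; congr 1; ring_nf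

lemma timeEvolution_zero' (H : 𝓗 →L[ℂ] 𝓗) : timeEvolution H 0 = 1 := by
  simp [timeEvolution_eq, NormedSpace.exp_zero]

lemma timeEvolution_mul (H : 𝓗 →L[ℂ] 𝓗) (s t : ℝ) :
    timeEvolution H s * timeEvolution H t = timeEvolution H (s + t) := by
  simp only [timeEvolution_eq]
  let +nondep : NormedAlgebra ℚ (𝓗 →L[ℂ] 𝓗) := .restrictScalars ℚ ℂ (𝓗 →L[ℂ] 𝓗)
  rw [← NormedSpace.exp_add_of_commute (((Commute.refl _).smul_left _).smul_right _)]
  congr 1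
  push_cast
  rw [add_smul]

lemma timeEvolution_star (H : 𝓗 →L[ℂ] 𝓗) (hH : IsSelfAdjoint H) (t : ℝ) :
    star (timeEvolution H t) = timeEvolution H (-t) := by
  rw [timeEvolution_eq, timeEvolution_eq, NormedSpace.star_exp]
  congr 1
  rw [star_smul, star_smul, hH.star_eq]
  push_cast
  simp [smul_smul]

lemma timeEvolution_norm_apply (H : 𝓗 →L[ℂ] 𝓗) (hH : IsSelfAdjoint H) (t : ℝ) (x : 𝓗) :
    ‖timeEvolution H t x‖ = ‖x‖ := by
  have h1 : (inner ℂ (timeEvolution H t x) (timeEvolution H t x) : ℂ) = inner ℂ x x := by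
    rw [← ContinuousLinearMap.adjoint_inner_right, ← ContinuousLinearMap.star_eq_adjoint,
      timeEvolution_star H hH]
    rw [show timeEvolution H (-t) (timeEvolution H t x)
          = (timeEvolution H (-t) * timeEvolution H t) x from rfl,
      timeEvolution_mul, neg_add_cancel, timeEvolution_zero']
    rfl
  rw [inner_self_eq_norm_sq_to_K, inner_self_eq_norm_sq_to_K] at h1
  have h2 : ‖timeEvolution H t x‖ ^ 2 = ‖x‖ ^ 2 := by exact_mod_cast h1
  nlinarith [norm_nonneg (timeEvolution H t x), norm_nonneg x]

/-- The autocorrelation function `t ↦ ⟨ψ, e^{-iHt}ψ⟩`. -/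
noncomputable def acf (H : 𝓗 →L[ℂ] 𝓗) (ψ : 𝓗) (t : ℝ) : ℂ :=
  inner ℂ ψ (timeEvolution H t ψ)

lemma acf_continuous (H : 𝓗 →L[ℂ] 𝓗) (ψ : 𝓗) : Continuous (acf H ψ) := by
  unfold acf
  simp only [timeEvolution_eq]
  let +nondep : NormedAlgebra ℚ (𝓗 →L[ℂ] 𝓗) := .restrictScalars ℚ ℂ (𝓗 →L[ℂ] 𝓗)
  exact (innerSL ℂ ψ).continuous.comp <|
    (ContinuousLinearMap.apply ℂ 𝓗 ψ).continuous.comp <|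
      NormedSpace.exp_continuous.comp <| (continuous_ofReal.smul continuous_const)

lemma acf_zero (H : 𝓗 →L[ℂ] 𝓗) (ψ : 𝓗) (hψ : ‖ψ‖ = 1) : acf H ψ 0 = 1 := by
  simp [acf, timeEvolution, NormedSpace.exp_zero, inner_self_eq_norm_sq_to_K, hψ]

lemma acf_analyticAt (H : 𝓗 →L[ℂ] 𝓗) (ψ : 𝓗) (x : ℝ) : AnalyticAt ℝ (acf H ψ) x := by
  have hF : AnalyticAt ℂ
      (fun w : ℂ => (innerSL ℂ ψ) ((ContinuousLinearMap.apply ℂ 𝓗 ψ)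
        (NormedSpace.exp (w • ((-Complex.I) • H))))) (x : ℂ) := by
    refine ((innerSL ℂ ψ).analyticAt _).comp <|
      ((ContinuousLinearMap.apply ℂ 𝓗 ψ).analyticAt _).comp <|
        (NormedSpace.exp_analytic _).comp ?_
    exact ((ContinuousLinearMap.id ℂ ℂ).smulRight ((-Complex.I) • H)).analyticAt _
  have := (hF.restrictScalars (𝕜 := ℝ)).comp (Complex.ofRealCLM.analyticAt x)
  apply this.congr
  filter_upwards with t
  simp [acf, timeEvolution_eq, ContinuousLinearMap.apply]

lemma norm_acf_le (H : 𝓗 →L[ℂ] 𝓗) (hH : IsSelfAdjoint H) (ψ : 𝓗) (hψ : ‖ψ‖ = 1) (t : ℝ) :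
    ‖acf H ψ t‖ ≤ 1 := by
  calc ‖acf H ψ t‖ ≤ ‖ψ‖ * ‖timeEvolution H t ψ‖ := norm_inner_le_norm _ _
  _ = 1 := by rw [timeEvolution_norm_apply H hH, hψ]; ring

lemma acf_neg (H : 𝓗 →L[ℂ] 𝓗) (hH : IsSelfAdjoint H) (ψ : 𝓗) (t : ℝ) :
    acf H ψ (-t) = starRingEnd ℂ (acf H ψ t) := by
  unfold acf
  rw [← timeEvolution_star H hH t, ContinuousLinearMap.star_eq_adjoint,
    ContinuousLinearMap.adjoint_inner_right, ← inner_conj_symm]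

lemma hasDerivAt_comp_ofReal' {E : Type*} [NormedAddCommGroup E] [NormedSpace ℂ E]
    {f : ℂ → E} {f' : E} {x : ℝ} (hf : HasDerivAt f f' (x : ℂ)) :
    HasDerivAt (fun t : ℝ => f (t : ℂ)) f' x := by
  simpa [Function.comp_def] using (hf.hasFDerivAt.restrictScalars ℝ).comp_hasDerivAt x Complex.ofRealCLM.hasDerivAt

lemma timeEvolution_continuous (H : 𝓗 →L[ℂ] 𝓗) :
    Continuous fun t : ℝ => timeEvolution H t := by
  simp only [timeEvolution_eq]
  let +nondep : NormedAlgebra ℚ (𝓗 →L[ℂ] 𝓗) := .restrictScalars ℚ ℂ (𝓗 →L[ℂ] 𝓗)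
  exact NormedSpace.exp_continuous.comp (continuous_ofReal.smul continuous_const)

lemma timeEvolution_hasDerivAt (H : 𝓗 →L[ℂ] 𝓗) (ψ : 𝓗) (T : ℝ) :
    HasDerivAt (fun t : ℝ => timeEvolution H t ψ)
      ((((-Complex.I) • H) * timeEvolution H T) ψ) T := by
  have h1 : HasDerivAt (fun w : ℂ => NormedSpace.exp (w • ((-Complex.I) • H)))
      (((-Complex.I) • H) * NormedSpace.exp (((T : ℂ)) • ((-Complex.I) • H))) (T : ℂ) :=
    hasDerivAt_exp_smul_const' _ _
  have h2 := (ContinuousLinearMap.apply ℂ 𝓗 ψ).hasFDerivAt.comp_hasDerivAt (T : ℂ) h1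
  have h3 := hasDerivAt_comp_ofReal' h2
  simp only [timeEvolution_eq]
  exact h3

/-- Laplace-transform formula for the resolvent of a self-adjoint operator. -/
lemma resolvent_inner_eq (H : 𝓗 →L[ℂ] 𝓗) (hH : IsSelfAdjoint H) (ψ : 𝓗)
    (hU : ∀ t, ‖timeEvolution H t ψ‖ = 1) {z : ℂ} (hz : 0 < z.im) :
    (inner ℂ ψ (resolventOp H z ψ) : ℂ)
      = Complex.I * ∫ t in Ioi (0:ℝ), Complex.exp (Complex.I * z * t) * acf H ψ t := by
  set ε : ℝ := z.im with hε
  set c : ℝ → ℂ := fun t => Complex.exp (Complex.I * z * t) with hc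
  set F : ℝ → 𝓗 := fun t => c t • timeEvolution H t ψ with hF
  set X : ℝ → 𝓗 := fun t => (H - z • 1) (timeEvolution H t ψ) with hX
  have hcnorm : ∀ t : ℝ, ‖c t‖ = Real.exp (-ε * t) := by
    intro t
    rw [hc, Complex.norm_exp]
    have h : (Complex.I * z * (t : ℂ)).re = -ε * t := by
      simp [Complex.mul_re, Complex.mul_im, hε]
    rw [h]
  have hFnorm : ∀ t : ℝ, ‖F t‖ = Real.exp (-ε * t) := by
    intro t
    rw [hF]
    simp only [norm_smul, hU, mul_one, hcnorm]
  have hccont : Continuous c := by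
    rw [hc]; fun_prop
  have hFcont : Continuous F :=
    hccont.smul ((timeEvolution_continuous H).clm_apply continuous_const)
  have hXcont : Continuous X :=
    (H - z • 1).continuous.comp ((timeEvolution_continuous H).clm_apply continuous_const)
  have hFint : IntegrableOn F (Ioi (0:ℝ)) := by
    refine Integrable.mono' (exp_neg_integrableOn_Ioi 0 hz) hFcont.aestronglyMeasurable.restrict
      (ae_of_all _ fun t => ?_)
    exact (hFnorm t).le
  have hXint : IntegrableOn (fun t => c t • X t) (Ioi (0:ℝ)) := by
    refine Integrable.mono' ((exp_neg_integrableOn_Ioi 0 hz).mul_const ‖H - z • 1‖)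
      (hccont.smul hXcont).aestronglyMeasurable.restrict (ae_of_all _ fun t => ?_)
    rw [norm_smul, hcnorm]
    have : ‖X t‖ ≤ ‖H - z • 1‖ := by
      calc ‖X t‖ ≤ ‖H - z • 1‖ * ‖timeEvolution H t ψ‖ := (H - z • 1).le_opNorm _
      _ = ‖H - z • 1‖ := by rw [hU]; ring
    exact mul_le_mul_of_nonneg_left this (Real.exp_pos _).le
  -- derivative of F
  have hderiv : ∀ T : ℝ, HasDerivAt F ((-Complex.I) • (c T • X T)) T := by
    intro T
    have hc' : HasDerivAt c (Complex.I * z * c T) T := by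
      have h1 : HasDerivAt (fun w : ℂ => Complex.exp (Complex.I * z * w))
          (Complex.exp (Complex.I * z * ((T:ℝ):ℂ)) * (Complex.I * z * 1)) (((T:ℝ)):ℂ) :=
        ((hasDerivAt_id (((T:ℝ)):ℂ)).const_mul (Complex.I * z)).cexp
      have h2 := h1.comp_ofReal
      convert h2 using 1
      rw [hc]; ring
    have hv' := timeEvolution_hasDerivAt H ψ T
    have := hc'.smul hv'
    convert this using 1
    · rfl
    rw [hX, hc]
    simp only [ContinuousLinearMap.mul_apply, ContinuousLinearMap.sub_apply,
      ContinuousLinearMap.smul_apply, ContinuousLinearMap.one_apply]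
    module
  -- interval integral identity
  have hint_eq : ∀ T : ℝ, ∫ t in (0:ℝ)..T, c t • X t = Complex.I • (F T - F 0) := by
    intro T
    have h0 : ∫ t in (0:ℝ)..T, (-Complex.I) • (c t • X t) = F T - F 0 := by
      refine intervalIntegral.integral_eq_sub_of_hasDerivAt (fun t _ => hderiv t) ?_
      exact (Continuous.intervalIntegrable (by fun_prop) _ _)
    rw [intervalIntegral.integral_smul] at h0
    have := congrArg (fun w => Complex.I • w) h0
    simpa [smul_smul] using this
  -- limits
  have hFlim : Filter.Tendsto F Filter.atTop (nhds 0) := by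
    rw [tendsto_zero_iff_norm_tendsto_zero]
    simp only [hFnorm]
    have : Filter.Tendsto (fun t : ℝ => -ε * t) Filter.atTop Filter.atBot :=
      Filter.Tendsto.const_mul_atTop_of_neg (neg_lt_zero.mpr hz) Filter.tendsto_id
    exact Real.tendsto_exp_atBot.comp this
  have hT1 : Filter.Tendsto (fun T => ∫ t in (0:ℝ)..T, c t • X t) Filter.atTop
      (nhds (∫ t in Ioi (0:ℝ), c t • X t)) :=
    intervalIntegral_tendsto_integral_Ioi 0 hXint Filter.tendsto_id
  have hT2 : Filter.Tendsto (fun T => Complex.I • (F T - F 0)) Filter.atTop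
      (nhds (Complex.I • ((0:𝓗) - F 0))) :=
    ((hFlim.sub_const (F 0)).const_smul Complex.I)
  have hveq : ∫ t in Ioi (0:ℝ), c t • X t = Complex.I • ((0:𝓗) - F 0) := by
    refine tendsto_nhds_unique ?_ hT2
    simpa only [hint_eq] using hT1
  have hF0 : F 0 = ψ := by
    simp [hF, hc, timeEvolution, NormedSpace.exp_zero]
  -- main algebraic identity
  set v : 𝓗 := ∫ t in Ioi (0:ℝ), F t with hv
  have key : (H - z • 1) (Complex.I • v) = ψ := by
    have h1 : (H - z • 1) v = ∫ t in Ioi (0:ℝ), (H - z • 1) (F t) :=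
      ((H - z • 1).integral_comp_comm hFint).symm
    have h2 : ∀ t, (H - z • 1) (F t) = c t • X t := by
      intro t; rw [hF, hX]; simp
    rw [_root_.map_smul, h1]
    simp_rw [h2]
    rw [hveq, hF0]
    simp [smul_smul, Complex.I_mul_I]
  -- invertibility
  have hUnit : IsUnit (H - z • 1) := by
    have hznot : z ∉ spectrum ℂ H := by
      intro hmem
      have h0 := hH.im_eq_zero_of_mem_spectrum hmem
      exact hz.ne' (hε.trans h0)
    rw [spectrum.mem_iff, not_not] at hznot
    have : H - z • 1 = -(algebraMap ℂ (𝓗 →L[ℂ] 𝓗) z - H) := by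
      rw [Algebra.algebraMap_eq_smul_one, neg_sub]
    rw [this]
    exact hznot.neg
  have hres : resolventOp H z ψ = Complex.I • v := by
    calc resolventOp H z ψ = Ring.inverse (H - z • 1) ((H - z • 1) (Complex.I • v)) := by
          rw [key]; rfl
    _ = (Ring.inverse (H - z • 1) * (H - z • 1)) (Complex.I • v) := rfl
    _ = Complex.I • v := by rw [Ring.inverse_mul_cancel _ hUnit]; rfl
  rw [hres, inner_smul_right]
  congr 1
  rw [hv, ← integral_inner hFint ψ]
  refine setIntegral_congr_fun measurableSet_Ioi fun t _ => ?_
  rw [hF]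
  simp only [inner_smul_right]
  rfl

end Aux

section AuxReal

open Real

lemma expAbs_integrableOn_Ioi (b : ℝ) (hb : 0 < b) :
    IntegrableOn (fun t : ℝ => Real.exp (-b * |t|)) (Ioi (0:ℝ)) :=
  (exp_neg_integrableOn_Ioi 0 hb).congr_fun
    (fun x hx => by rw [abs_of_pos hx]) measurableSet_Ioi

lemma expAbs_integrable (b : ℝ) (hb : 0 < b) :
    Integrable (fun t : ℝ => Real.exp (-b * |t|)) := by
  have h1 : IntegrableOn (fun t : ℝ => Real.exp (-b * |t|)) (Ioi (0:ℝ)) :=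
    expAbs_integrableOn_Ioi b hb
  have h2 : IntegrableOn (fun t : ℝ => Real.exp (-b * |t|)) (Iic (0:ℝ)) := by
    have m : MeasurableEmbedding (Neg.neg : ℝ → ℝ) :=
      (Homeomorph.neg ℝ).measurableEmbedding
    have key := m.integrableOn_map_iff
      (f := fun t : ℝ => Real.exp (-b * |t|)) (s := Iic (0:ℝ)) (μ := (volume : Measure ℝ))
    rw [Measure.map_neg_eq_self (volume : Measure ℝ)] at key
    rw [key]
    simp only [Function.comp_def, abs_neg, neg_preimage, neg_Iic, neg_zero]
    exact (integrableOn_Ici_iff_integrableOn_Ioi).mpr h1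
  have := h2.union h1
  rw [Iic_union_Ioi] at this
  exact integrableOn_univ.mp this

lemma integral_exp_neg_mul_Ioi_zero (b : ℝ) (hb : 0 < b) :
    ∫ x in Ioi (0:ℝ), Real.exp (-b * x) = 1 / b := by
  have := integral_comp_mul_left_Ioi (fun y : ℝ => Real.exp (-y)) 0 hb
  simp only [mul_zero] at this
  simp only [neg_mul] at this ⊢
  calc ∫ x in Ioi (0:ℝ), Real.exp (-(b * x)) = b⁻¹ • ∫ x in Ioi (0:ℝ), Real.exp (-x) := this
  _ = 1 / b := by rw [integral_exp_neg_Ioi_zero, smul_eq_mul, mul_one, one_div]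

lemma integral_expAbs (b : ℝ) (hb : 0 < b) :
    ∫ t : ℝ, Real.exp (-b * |t|) = 2 / b := by
  rw [show (fun t : ℝ => Real.exp (-b * |t|)) = fun t : ℝ => (fun y => Real.exp (-b * y)) |t|
      from rfl]
  rw [integral_comp_abs (f := fun y => Real.exp (-b * y)), integral_exp_neg_mul_Ioi_zero b hb]
  ring

end AuxReal

section AuxKer

open scoped ComplexConjugate

/-- The Cauchy–Schwarz extremizer kernel `e^{-ε|t|} e^{-iλt}`. -/
noncomputable def fker (lam ε : ℝ) (t : ℝ) : ℂ :=
  (Real.exp (-ε * |t|) : ℂ) * Complex.exp (-(Complex.I * lam * t))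

lemma fker_continuous (lam ε : ℝ) : Continuous (fker lam ε) := by
  unfold fker; fun_prop

lemma fker_zero (lam ε : ℝ) : fker lam ε 0 = 1 := by simp [fker]

lemma fker_norm (lam ε : ℝ) (t : ℝ) : ‖fker lam ε t‖ = Real.exp (-ε * |t|) := by
  unfold fker
  rw [norm_mul, Complex.norm_real, Real.norm_eq_abs,
    Complex.norm_exp]
  have : (-(Complex.I * lam * t)).re = 0 := by simp
  rw [this, Real.exp_zero, abs_of_pos (Real.exp_pos _), mul_one]

lemma fker_neg (lam ε : ℝ) (t : ℝ) : fker lam ε (-t) = conj (fker lam ε t) := by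
  unfold fker
  rw [abs_neg, map_mul, Complex.conj_ofReal, ← Complex.exp_conj]
  have h1 : conj (-(Complex.I * lam * t)) = Complex.I * lam * t := by
    simp [map_mul, map_neg]
  rw [h1]
  congr 1
  push_cast
  ring

lemma conj_fker_pos (lam ε : ℝ) {t : ℝ} (ht : 0 < t) :
    conj (fker lam ε t) = Complex.exp (Complex.I * ((lam : ℂ) + ε * Complex.I) * t) := by
  unfold fker
  rw [map_mul, Complex.conj_ofReal, ← Complex.exp_conj]
  have h1 : conj (-(Complex.I * lam * t)) = Complex.I * lam * t := by
    simp [map_mul, map_neg]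
  rw [h1, abs_of_pos ht]
  have h2 : Complex.I * ((lam : ℂ) + ε * Complex.I) * t
      = Complex.I * lam * t + ((-ε * t : ℝ) : ℂ) := by
    rw [show Complex.I * ((lam : ℂ) + ε * Complex.I) = Complex.I * lam - ε by
      rw [mul_add]
      rw [show Complex.I * ((ε:ℂ) * Complex.I) = -(ε:ℂ) by
        rw [mul_comm, mul_assoc, Complex.I_mul_I, mul_neg_one]]
      ring]
    push_cast
    ring
  rw [h2, Complex.exp_add, ← Complex.ofReal_exp]
  ring

lemma fker_eq_cexp_pos (lam ε : ℝ) {t : ℝ} (ht : 0 < t) :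
    fker lam ε t = Complex.exp ((-(ε:ℂ) - Complex.I * lam) * t) := by
  unfold fker
  rw [abs_of_pos ht]
  rw [show (-(ε:ℂ) - Complex.I * lam) * t = ((-ε * t : ℝ) : ℂ) + -(Complex.I * lam * t) by
    push_cast; ring]
  rw [Complex.exp_add, ← Complex.ofReal_exp]

/-- Reflection identity: the full-line weighted integral is `J + conj J`. -/
lemma reflection_integral (a : ℝ → ℂ) (ha : Continuous a) (hb : ∀ t, ‖a t‖ ≤ 1)
    (hrefl : ∀ t, a (-t) = conj (a t)) (lam ε : ℝ) (hε : 0 < ε) :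
    (∫ t : ℝ, conj (fker lam ε t) * a t)
      = (∫ t in Ioi (0:ℝ), Complex.exp (Complex.I * ((lam : ℂ) + ε * Complex.I) * t) * a t)
        + conj (∫ t in Ioi (0:ℝ),
            Complex.exp (Complex.I * ((lam : ℂ) + ε * Complex.I) * t) * a t) := by
  set g : ℝ → ℂ := fun t => conj (fker lam ε t) * a t with hg
  have hgcont : Continuous g := ((Complex.continuous_conj.comp (fker_continuous lam ε)).mul ha)
  have hgint : Integrable g := by
    refine Integrable.mono' (expAbs_integrable ε hε) hgcont.aestronglyMeasurable
      (ae_of_all _ fun t => ?_)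
    rw [hg]
    calc ‖conj (fker lam ε t) * a t‖ = ‖fker lam ε t‖ * ‖a t‖ := by
          rw [norm_mul, RCLike.norm_conj]
    _ ≤ Real.exp (-ε * |t|) * 1 := by
          rw [fker_norm]
          exact mul_le_mul_of_nonneg_left (hb t) (Real.exp_pos _).le
    _ = Real.exp (-ε * |t|) := mul_one _
  have hsplit : (∫ t : ℝ, g t) = (∫ t in Iic (0:ℝ), g t) + ∫ t in Ioi (0:ℝ), g t := by
    rw [← setIntegral_union (Iic_disjoint_Ioi le_rfl) measurableSet_Ioi
      hgint.integrableOn hgint.integrableOn, Iic_union_Ioi, setIntegral_univ]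
  have hpos : (∫ t in Ioi (0:ℝ), g t)
      = ∫ t in Ioi (0:ℝ), Complex.exp (Complex.I * ((lam : ℂ) + ε * Complex.I) * t) * a t := by
    refine setIntegral_congr_fun measurableSet_Ioi fun t ht => ?_
    rw [hg]
    simp only
    rw [conj_fker_pos lam ε ht]
  have hgneg : ∀ t : ℝ, g (-t) = conj (g t) := by
    intro t
    rw [hg]
    simp only
    rw [fker_neg, hrefl]
    simp [map_mul]
  have hneg : (∫ t in Iic (0:ℝ), g t) = conj (∫ t in Ioi (0:ℝ), g t) := by
    have h1 : (∫ t in Iic (0:ℝ), g t) = ∫ t in Iic (0:ℝ), conj (g (-t)) := by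
      refine setIntegral_congr_fun measurableSet_Iic fun t _ => ?_
      rw [hgneg, Complex.conj_conj]
    rw [h1, integral_comp_neg_Iic 0 (fun x => conj (g x)), neg_zero, ← integral_conj]
  rw [hsplit, hneg, hpos, add_comm]

/-- The squared `L²` norm of `toLp` equals the integral of the squared norm. -/
lemma norm_toLp_sq (f : ℝ → ℂ) (h : MemLp f 2 (volume : Measure ℝ)) :
    ‖(h.toLp f : Lp ℂ 2 (volume : Measure ℝ))‖ ^ 2 = ∫ t : ℝ, ‖f t‖ ^ 2 := by
  have h1 : (inner ℂ (h.toLp f) (h.toLp f) : ℂ) = ((∫ t : ℝ, ‖f t‖ ^ 2 : ℝ) : ℂ) := by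
    rw [MeasureTheory.L2.inner_def]
    have heq : ∀ᵐ t ∂(volume : Measure ℝ),
        (inner ℂ ((h.toLp f) t) ((h.toLp f) t) : ℂ) = ((‖f t‖ ^ 2 : ℝ) : ℂ) := by
      filter_upwards [h.coeFn_toLp] with t ht
      rw [ht, RCLike.inner_apply, RCLike.mul_conj]
      norm_cast
    rw [integral_congr_ae heq]
    exact integral_ofReal
  have h2 := inner_self_eq_norm_sq_to_K (𝕜 := ℂ) (h.toLp f)
  have h3 := h1.symm.trans h2
  have h4 : ((∫ t : ℝ, ‖f t‖ ^ 2 : ℝ) : ℂ) = ((‖h.toLp f‖ ^ 2 : ℝ) : ℂ) := by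
    rw [h3]; norm_cast
  exact (Complex.ofReal_inj.mp h4).symm

end AuxKer

/-- For a bounded self-adjoint `H`, unit vector `ψ`, `λ ∈ ℝ`, `ε > 0`,
the inequality `𝒯(H,ψ) ≥ (1/ε)·(2ε·Im⟨ψ, (H−λ−iε)⁻¹ψ⟩)²` is always strict whenever
`𝒯(H,ψ)` is finite: equality can never hold for a bounded (hence semibounded)
Hamiltonian. -/
theorem sojournTime_lower_bound_strict (H : 𝓗 →L[ℂ] 𝓗) (hH : IsSelfAdjoint H)
    (ψ : 𝓗) (hψ : ‖ψ‖ = 1) (lam ε : ℝ) (hε : 0 < ε)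
    (hfin : sojournTime H ψ ≠ ⊤) :
    ENNReal.ofReal ((1 / ε) *
        (2 * ε * (inner ℂ ψ (resolventOp H ((lam : ℂ) + (ε : ℂ) * Complex.I) ψ) : ℂ).im) ^ 2)
      < sojournTime H ψ := by
  classical
  set z : ℂ := (lam : ℂ) + (ε : ℂ) * Complex.I with hzdef
  have hzim : z.im = ε := by simp [hzdef]
  have hz : 0 < z.im := by rw [hzim]; exact hε
  have hU : ∀ t, ‖timeEvolution H t ψ‖ = 1 := fun t => by
    rw [timeEvolution_norm_apply H hH t ψ, hψ]
  set a : ℝ → ℂ := acf H ψ with hadef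
  have ha_cont : Continuous a := acf_continuous H ψ
  have ha_le : ∀ t, ‖a t‖ ≤ 1 := fun t => norm_acf_le H hH ψ hψ t
  have ha_refl : ∀ t, a (-t) = starRingEnd ℂ (a t) := fun t => acf_neg H hH ψ t
  have ha0 : a 0 = 1 := acf_zero H ψ hψ
  set J : ℂ := ∫ t in Set.Ioi (0:ℝ), Complex.exp (Complex.I * z * t) * a t with hJ
  have hres : (inner ℂ ψ (resolventOp H z ψ) : ℂ) = Complex.I * J :=
    resolvent_inner_eq H hH ψ hU hz
  set S : ℂ := ∫ t : ℝ, starRingEnd ℂ (fker lam ε t) * a t with hS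
  have hSval : S = J + starRingEnd ℂ J := by
    rw [hS, hJ, hzdef]
    exact reflection_integral a ha_cont ha_le ha_refl lam ε hε
  have hSre : S.re = 2 * J.re := by rw [hSval]; simp [Complex.add_re]; ring
  have hDim : (inner ℂ ψ (resolventOp H z ψ) : ℂ).im = J.re := by
    rw [hres]; simp [Complex.mul_im]
  -- L² setup
  have hsoj : sojournTime H ψ = ∫⁻ t : ℝ, ENNReal.ofReal (‖a t‖ ^ 2) := rfl
  have int_a_sq : Integrable (fun t : ℝ => ‖a t‖ ^ 2) := by
    refine ⟨(ha_cont.norm.pow 2).aestronglyMeasurable, ?_⟩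
    rw [hasFiniteIntegral_iff_ofReal (ae_of_all _ fun t => by positivity)]
    exact lt_of_le_of_ne le_top (hsoj ▸ hfin)
  have Ma : MemLp a 2 (volume : Measure ℝ) :=
    (memLp_two_iff_integrable_sq_norm ha_cont.aestronglyMeasurable).mpr int_a_sq
  have hfksq : (fun t : ℝ => ‖fker lam ε t‖ ^ 2) = fun t : ℝ => Real.exp (-(2 * ε) * |t|) := by
    funext t
    rw [fker_norm, sq, ← Real.exp_add]
    ring_nf
  have int_f_sq : Integrable (fun t : ℝ => ‖fker lam ε t‖ ^ 2) := by
    rw [hfksq]; exact expAbs_integrable _ (by positivity)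
  have Mf : MemLp (fker lam ε) 2 (volume : Measure ℝ) :=
    (memLp_two_iff_integrable_sq_norm (fker_continuous lam ε).aestronglyMeasurable).mpr int_f_sq
  set Aelt : Lp ℂ 2 (volume : Measure ℝ) := Ma.toLp a with hAelt
  set Felt : Lp ℂ 2 (volume : Measure ℝ) := Mf.toLp (fker lam ε) with hFelt
  have hinner : (inner ℂ Felt Aelt : ℂ) = S := by
    rw [MeasureTheory.L2.inner_def, hS]
    refine integral_congr_ae ?_
    filter_upwards [Mf.coeFn_toLp, Ma.coeFn_toLp] with t h1 h2
    rw [hAelt, hFelt] at *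
    rw [h1, h2, RCLike.inner_apply, mul_comm]
  have hFn : ‖Felt‖ ^ 2 = 1 / ε := by
    rw [hFelt, norm_toLp_sq]
    rw [hfksq, integral_expAbs _ (by positivity)]
    field_simp
  set Nsq : ℝ := ∫ t : ℝ, ‖a t‖ ^ 2 with hNsq
  have hAn : ‖Aelt‖ ^ 2 = Nsq := by rw [hAelt, norm_toLp_sq, hNsq]
  have hTeq : sojournTime H ψ = ENNReal.ofReal Nsq := by
    rw [hsoj, hNsq, ← MeasureTheory.ofReal_integral_eq_lintegral_ofReal int_a_sq
      (ae_of_all _ fun t => by positivity)]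
  have hApos : Aelt ≠ 0 := by
    intro h0
    have hae : a =ᵐ[volume] (fun _ => (0:ℂ)) := by
      refine (Ma.coeFn_toLp.symm).trans ?_
      rw [← hAelt, h0]
      exact Lp.coeFn_zero ℂ 2 volume
    have := (Continuous.ae_eq_iff_eq volume ha_cont continuous_const).mp hae
    have h1 := congrFun this 0
    rw [ha0] at h1
    exact one_ne_zero h1
  have hFpos : Felt ≠ 0 := by
    intro h0
    have hae : fker lam ε =ᵐ[volume] (fun _ => (0:ℂ)) := by
      refine (Mf.coeFn_toLp.symm).trans ?_
      rw [← hFelt, h0]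
      exact Lp.coeFn_zero ℂ 2 volume
    have := (Continuous.ae_eq_iff_eq volume (fker_continuous lam ε) continuous_const).mp hae
    have h1 := congrFun this 0
    rw [fker_zero] at h1
    exact one_ne_zero h1
  have hNsqpos : 0 < Nsq := by
    rw [← hAn]
    have : ‖Aelt‖ ≠ 0 := norm_ne_zero_iff.mpr hApos
    positivity
  have hCS : ‖S‖ ≤ ‖Felt‖ * ‖Aelt‖ := by
    rw [← hinner]; exact norm_inner_le_norm _ _
  have e1 : S.re ^ 2 ≤ ‖S‖ ^ 2 := by
    rw [← _root_.sq_abs S.re]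
    exact pow_le_pow_left₀ (abs_nonneg _) (Complex.abs_re_le_norm S) 2
  have e2 : ‖S‖ ^ 2 ≤ (1 / ε) * Nsq := by
    calc ‖S‖ ^ 2 ≤ (‖Felt‖ * ‖Aelt‖) ^ 2 := pow_le_pow_left₀ (norm_nonneg S) hCS 2
    _ = ‖Felt‖ ^ 2 * ‖Aelt‖ ^ 2 := by ring
    _ = (1 / ε) * Nsq := by rw [hFn, hAn]
  have hmain : ε * S.re ^ 2 ≤ Nsq := by
    have h3 : S.re ^ 2 ≤ (1 / ε) * Nsq := le_trans e1 e2
    calc ε * S.re ^ 2 ≤ ε * ((1 / ε) * Nsq) := by nlinarith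
    _ = Nsq := by field_simp
  -- rewrite the goal
  rw [hTeq]
  rw [show (1 / ε) * (2 * ε * (inner ℂ ψ (resolventOp H z ψ) : ℂ).im) ^ 2 = ε * S.re ^ 2 by
    rw [hDim, hSre]; field_simp]
  rw [ENNReal.ofReal_lt_ofReal_iff hNsqpos]
  rcases lt_or_eq_of_le hmain with hlt | heqc
  · exact hlt
  · exfalso
    -- equality case of Cauchy–Schwarz
    have h4 : ‖S‖ ^ 2 = (‖Felt‖ * ‖Aelt‖) ^ 2 := by
      have hfa : (‖Felt‖ * ‖Aelt‖) ^ 2 = (1 / ε) * Nsq := by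
        rw [mul_pow, hFn, hAn]
      have hge : (1 / ε) * Nsq ≤ S.re ^ 2 := by
        rw [← heqc]; field_simp; exact le_rfl
      refine le_antisymm (by rw [hfa]; exact e2) ?_
      rw [hfa]
      exact hge.trans e1
    have hnormS : ‖S‖ = ‖Felt‖ * ‖Aelt‖ := by
      have := congrArg Real.sqrt h4
      rwa [Real.sqrt_sq (norm_nonneg _), Real.sqrt_sq (by positivity)] at this
    obtain ⟨r, hr0, hr⟩ := (norm_inner_eq_norm_iff (𝕜 := ℂ) hFpos hApos).mp
      (by rw [hinner]; exact hnormS)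
    have hae : a =ᵐ[volume] fun t => r * fker lam ε t := by
      have step1 : (Aelt : ℝ → ℂ) =ᵐ[volume] a := Ma.coeFn_toLp
      have step2 : (⇑(r • Felt) : ℝ → ℂ) =ᵐ[volume] r • (Felt : ℝ → ℂ) := Lp.coeFn_smul r Felt
      have step3 : (Felt : ℝ → ℂ) =ᵐ[volume] fker lam ε := Mf.coeFn_toLp
      refine step1.symm.trans ?_
      rw [hr]
      refine step2.trans ?_
      filter_upwards [step3] with t ht
      simp only [Pi.smul_apply, ht, smul_eq_mul]
    have heqfun : a = fun t => r * fker lam ε t :=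
      (Continuous.ae_eq_iff_eq volume ha_cont
        (continuous_const.mul (fker_continuous lam ε))).mp hae
    have hr1 : r = 1 := by
      have h5 := congrFun heqfun 0
      rw [ha0, fker_zero, mul_one] at h5
      exact h5.symm
    have hafk : ∀ t, a t = fker lam ε t := by
      intro t
      rw [heqfun]
      simp [hr1]
    -- analytic continuation contradiction
    set b : ℝ → ℂ := fun t => Complex.exp ((-(ε:ℂ) - Complex.I * lam) * t) with hbdef
    have hb_an : ∀ x : ℝ, AnalyticAt ℝ b x := by
      intro x
      have hlin : AnalyticAt ℝ (fun t : ℝ => ((-(ε:ℂ) - Complex.I * lam)) * (t : ℂ)) x :=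
        analyticAt_const.mul (Complex.ofRealCLM.analyticAt x)
      exact (analyticAt_cexp.restrictScalars).comp hlin
    have ha_an : ∀ x : ℝ, AnalyticAt ℝ a x := acf_analyticAt H ψ
    have hev : a =ᶠ[nhds (1:ℝ)] b := by
      filter_upwards [Ioi_mem_nhds (zero_lt_one)] with t ht
      rw [hafk t, hbdef, fker_eq_cexp_pos lam ε ht]
    have hab : a = b :=
      AnalyticOnNhd.eq_of_eventuallyEq (fun x _ => ha_an x) (fun x _ => hb_an x) hev
    have hcontr1 : ‖a (-1)‖ = Real.exp (-ε) := by
      rw [hafk, fker_norm]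
      norm_num
    have hcontr2 : ‖b (-1)‖ = Real.exp ε := by
      rw [hbdef]
      simp only
      rw [Complex.norm_exp]
      congr 1
      push_cast
      simp [Complex.sub_re, Complex.mul_re]
    rw [hab, hcontr2] at hcontr1
    have := Real.exp_injective hcontr1
    linarith
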